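/- With f as above (f(2i) = 2i + 2 + x_i and f(2i+1) = 2i + 3 − x_i mod 2p), the permutation f consists of a single cycle if the parity of x (the sum of the bits x_i mod 2) is odd, and of exactly two cycles if the parity is even. -/

import Mathlib

/-- The orbit equivalence relation of a function `f` on a type: two points are
equivalent iff some forward iterates of `f` send them to the same point.  For a
permutation of a finite type, the equivalence classes are exactly the cycles of
the cycle decomposition (fixed points counted as cycles). -/
def orbitSetoid {α : Type _} (f : α → α) : Setoid α where
  r a b := ∃ n m : ℕ, f^[n] a = f^[m] b
  iseqv := by
    constructor
    · exact fun a => ⟨0, 0, rfl⟩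
    · rintro a b ⟨n, m, h⟩; exact ⟨m, n, h.symm⟩
    · rintro a b c ⟨n, m, h1⟩ ⟨n', m', h2⟩
      refine ⟨n' + n, m + m', ?_⟩
      calc f^[n' + n] a = f^[n'] (f^[n] a) := Function.iterate_add_apply f n' n a
        _ = f^[n'] (f^[m] b) := by rw [h1]
        _ = f^[n' + m] b := (Function.iterate_add_apply f n' m b).symm
        _ = f^[m + n'] b := by rw [Nat.add_comm]
        _ = f^[m] (f^[n'] b) := Function.iterate_add_apply f m n' b
        _ = f^[m] (f^[m'] c) := by rw [h2]
        _ = f^[m + m'] c := (Function.iterate_add_apply f m m' c).symm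


def xnat (p : ℕ) (x : Fin p → Bool) : ℕ → ℕ :=
  fun j => if h : j < p then (x ⟨j, h⟩).toNat else 0

def sPar (p : ℕ) (x : Fin p → Bool) : ℕ → ℕ :=
  fun k => ∑ j ∈ Finset.range k, xnat p x j

lemma sPar_succ (p : ℕ) (x : Fin p → Bool) (k : ℕ) :
    sPar p x (k + 1) = sPar p x k + xnat p x k := Finset.sum_range_succ _ _

lemma xnat_le (p : ℕ) (x : Fin p → Bool) (k : ℕ) : xnat p x k ≤ 1 := by
  unfold xnat; split
  · exact Bool.toNat_le _
  · omega

lemma xnat_eq (p : ℕ) (x : Fin p → Bool) (k : ℕ) (h : k < p) :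
    xnat p x k = (x ⟨k, h⟩).toNat := dif_pos h

lemma iter_formula (p : ℕ) (hp : 1 ≤ p) (x : Fin p → Bool)
    (f : Fin (2 * p) → Fin (2 * p))
    (hf : ∀ i : Fin p,
      f ⟨2 * i.val, by have _ := hp; omega⟩ =
        ⟨(2 * i.val + 2 + (x i).toNat) % (2 * p), Nat.mod_lt _ (by have _ := hp; omega)⟩ ∧
      f ⟨2 * i.val + 1, by have _ := hp; omega⟩ =
        ⟨(2 * i.val + 3 - (x i).toNat) % (2 * p), Nat.mod_lt _ (by have _ := hp; omega)⟩) :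
    ∀ k (hkp2 : k ≤ p) ε (hε : ε < 2),
      f^[k] ⟨ε, by omega⟩ =
        ⟨(2 * k + (ε + sPar p x k) % 2) % (2 * p), Nat.mod_lt _ (by omega)⟩ := by
  intro k
  induction k with
  | zero =>
    intro _ ε hε
    apply Fin.ext
    simp only [Function.iterate_zero, id_eq, sPar, Finset.range_zero, Finset.sum_empty,
      Nat.mul_zero, Nat.zero_add, Nat.add_zero]
    rw [Nat.mod_eq_of_lt hε, Nat.mod_eq_of_lt (show ε < 2 * p by omega)]
  | succ k ih =>
    intro hk ε hε
    have hkp : k < p := by omega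
    rw [Function.iterate_succ_apply', ih (by omega) ε hε]
    set t := (x ⟨k, hkp⟩).toNat with ht
    have ht1 : t ≤ 1 := Bool.toNat_le _
    have hs : sPar p x (k + 1) = sPar p x k + t := by
      rw [sPar_succ, xnat_eq p x k hkp]
    set m := (ε + sPar p x k) % 2 with hm
    have hm2 : m < 2 := Nat.mod_lt _ (by omega)
    rcases (by omega : m = 0 ∨ m = 1) with h0 | h1
    · have heq : (⟨(2 * k + m) % (2 * p), Nat.mod_lt _ (by omega)⟩ : Fin (2 * p)) =
          ⟨2 * (⟨k, hkp⟩ : Fin p).val, by omega⟩ := by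
        apply Fin.ext
        simp only
        rw [h0, Nat.add_zero, Nat.mod_eq_of_lt (by omega)]
      rw [heq, (hf ⟨k, hkp⟩).1]
      apply Fin.ext
      simp only [hs, ← ht]
      congr 1
      omega
    · have heq : (⟨(2 * k + m) % (2 * p), Nat.mod_lt _ (by omega)⟩ : Fin (2 * p)) =
          ⟨2 * (⟨k, hkp⟩ : Fin p).val + 1, by omega⟩ := by
        apply Fin.ext
        simp only
        rw [h1, Nat.mod_eq_of_lt (by omega)]
      rw [heq, (hf ⟨k, hkp⟩).2]
      apply Fin.ext
      simp only [hs, ← ht]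
      congr 1
      omega

lemma color_invariant (p : ℕ) (hp : 1 ≤ p) (x : Fin p → Bool)
    (f : Fin (2 * p) → Fin (2 * p))
    (hf : ∀ i : Fin p,
      f ⟨2 * i.val, by have _ := hp; omega⟩ =
        ⟨(2 * i.val + 2 + (x i).toNat) % (2 * p), Nat.mod_lt _ (by have _ := hp; omega)⟩ ∧
      f ⟨2 * i.val + 1, by have _ := hp; omega⟩ =
        ⟨(2 * i.val + 3 - (x i).toNat) % (2 * p), Nat.mod_lt _ (by have _ := hp; omega)⟩)
    (heven : sPar p x p % 2 = 0) (v : Fin (2 * p)) :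
    ((f v).val % 2 + sPar p x ((f v).val / 2)) % 2
      = (v.val % 2 + sPar p x (v.val / 2)) % 2 := by
  set i := v.val / 2 with hi
  set r := v.val % 2 with hr
  have hip : i < p := by omega
  have hv : v.val = 2 * i + r := by omega
  set t := (x ⟨i, hip⟩).toNat with ht
  have ht1 : t ≤ 1 := Bool.toNat_le _
  have hs : sPar p x (i + 1) = sPar p x i + t := by
    rw [sPar_succ, xnat_eq p x i hip]
  have h00 : sPar p x 0 = 0 := by simp [sPar]
  rcases (by omega : r = 0 ∨ r = 1) with h0 | h1
  · have hveq : v = ⟨2 * (⟨i, hip⟩ : Fin p).val, by omega⟩ := Fin.ext (by simp; omega)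
    rw [hveq, (hf ⟨i, hip⟩).1, ← ht]
    simp only
    rcases (by omega : i + 1 < p ∨ i + 1 = p) with hlt | heqp
    · have : (2 * i + 2 + t) % (2 * p) = 2 * (i+1) + t := by
        rw [Nat.mod_eq_of_lt (by omega)]; omega
      rw [this]
      have hdiv : (2 * (i+1) + t) / 2 = i + 1 := by omega
      have hmod : (2 * (i+1) + t) % 2 = t := by omega
      rw [hdiv, hmod, hs]
      omega
    · -- wrap-around: i = p - 1
      have : (2 * i + 2 + t) % (2 * p) = t := by
        have : 2 * i + 2 + t = t + 1 * (2 * p) := by omega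
        rw [this, Nat.add_mul_mod_self_right, Nat.mod_eq_of_lt (by omega)]
      rw [this]
      have hdiv : t / 2 = 0 := by omega
      have hmod : t % 2 = t := by omega
      rw [hdiv, hmod, h00]
      have hw : sPar p x p = sPar p x i + t := by rw [heqp] at hs; exact hs
      omega
  · have hveq : v = ⟨2 * (⟨i, hip⟩ : Fin p).val + 1, by omega⟩ := Fin.ext (by simp; omega)
    rw [hveq, (hf ⟨i, hip⟩).2, ← ht]
    simp only
    rcases (by omega : i + 1 < p ∨ i + 1 = p) with hlt | heqp
    · have : (2 * i + 3 - t) % (2 * p) = 2 * (i+1) + (1 - t) := by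
        rw [Nat.mod_eq_of_lt (by omega)]; omega
      rw [this]
      have hdiv : (2 * (i+1) + (1-t)) / 2 = i + 1 := by omega
      have hmod : (2 * (i+1) + (1-t)) % 2 = 1 - t := by omega
      rw [hdiv, hmod, hs]
      omega
    · have : (2 * i + 3 - t) % (2 * p) = 1 - t := by
        have : 2 * i + 3 - t = (1 - t) + 1 * (2 * p) := by omega
        rw [this, Nat.add_mul_mod_self_right, Nat.mod_eq_of_lt (by omega)]
      rw [this]
      have hdiv : (1 - t) / 2 = 0 := by omega
      have hmod : (1 - t) % 2 = 1 - t := by omega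
      rw [hdiv, hmod, h00]
      have hw : sPar p x p = sPar p x i + t := by rw [heqp] at hs; exact hs
      omega

/-- The permutation `f(2i) = 2i + 2 + x_i`, `f(2i+1) = 2i + 3 - x_i` (mod `2p`)
has a single cycle when the parity of `x` is odd and exactly two cycles when
the parity of `x` is even. -/
theorem parity_graph_cycle_count (p : ℕ) (hp : 1 ≤ p) (x : Fin p → Bool)
    (f : Fin (2 * p) → Fin (2 * p))
    (hf : ∀ i : Fin p,
      f ⟨2 * i.val, by omega⟩ =
        ⟨(2 * i.val + 2 + (x i).toNat) % (2 * p), Nat.mod_lt _ (by omega)⟩ ∧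
      f ⟨2 * i.val + 1, by omega⟩ =
        ⟨(2 * i.val + 3 - (x i).toNat) % (2 * p), Nat.mod_lt _ (by omega)⟩) :
    Nat.card (Quotient (orbitSetoid f)) =
      if (∑ i, (x i).toNat) % 2 = 1 then 1 else 2 := by
  have hS : (∑ i, (x i).toNat) = sPar p x p := by
    rw [sPar, ← Fin.sum_univ_eq_sum_range (fun j => xnat p x j) p]
    apply Finset.sum_congr rfl
    intro i _
    rw [xnat_eq p x i.val i.isLt]
  have h00 : sPar p x 0 = 0 := by simp [sPar]
  -- color of a vertex
  have hc2 : ∀ v : Fin (2 * p), (v.val % 2 + sPar p x (v.val / 2)) % 2 < 2 :=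
    fun v => Nat.mod_lt _ (by omega)
  -- every vertex is reached from vertex ⟨c v⟩
  have hreach : ∀ v : Fin (2 * p),
      f^[v.val / 2] ⟨(v.val % 2 + sPar p x (v.val / 2)) % 2, by have := hc2 v; omega⟩ = v := by
    intro v
    have hip : v.val / 2 < p := by omega
    rw [iter_formula p hp x f hf (v.val / 2) (by omega) _ (hc2 v)]
    apply Fin.ext
    simp only
    have h1 : ((v.val % 2 + sPar p x (v.val / 2)) % 2 + sPar p x (v.val / 2)) % 2
        = v.val % 2 := by omega
    rw [h1, Nat.mod_eq_of_lt (by omega)]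
    omega
  have hvc : ∀ v : Fin (2 * p),
      (orbitSetoid f).r v ⟨(v.val % 2 + sPar p x (v.val / 2)) % 2, by have := hc2 v; omega⟩ :=
    fun v => ⟨0, v.val / 2, (hreach v).symm⟩
  by_cases hodd : (∑ i, (x i).toNat) % 2 = 1
  · rw [if_pos hodd]
    have hsp : sPar p x p % 2 = 1 := by rw [← hS]; exact hodd
    -- 0 and 1 are in the same orbit
    have h01 : (orbitSetoid f).r ⟨0, by omega⟩ ⟨1, by omega⟩ := by
      refine ⟨p, 0, ?_⟩
      rw [iter_formula p hp x f hf p le_rfl 0 (by omega)]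
      apply Fin.ext
      simp only [Function.iterate_zero, id_eq, Nat.zero_add, hsp]
      have : 2 * p + 1 = 1 + 1 * (2 * p) := by omega
      rw [this, Nat.add_mul_mod_self_right, Nat.mod_eq_of_lt (by omega)]
    have hall : ∀ a b : ℕ, (ha : a < 2) → (hb : b < 2) →
        (orbitSetoid f).r ⟨a, by omega⟩ ⟨b, by omega⟩ := by
      intro a b ha hb
      rcases (by omega : a = 0 ∨ a = 1) with rfl | rfl <;>
        rcases (by omega : b = 0 ∨ b = 1) with rfl | rfl
      · exact (orbitSetoid f).iseqv.refl _
      · exact h01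
      · exact (orbitSetoid f).iseqv.symm h01
      · exact (orbitSetoid f).iseqv.refl _
    have hsub : ∀ a b : Quotient (orbitSetoid f), a = b := by
      intro a b
      induction a using Quotient.ind
      induction b using Quotient.ind
      rename_i v w
      apply Quotient.sound
      exact (orbitSetoid f).iseqv.trans (hvc v)
        ((orbitSetoid f).iseqv.trans (hall _ _ (hc2 v) (hc2 w))
          ((orbitSetoid f).iseqv.symm (hvc w)))
    haveI : Subsingleton (Quotient (orbitSetoid f)) := ⟨hsub⟩
    haveI : Nonempty (Quotient (orbitSetoid f)) :=
      ⟨Quotient.mk _ ⟨0, by omega⟩⟩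
    exact Nat.card_eq_one_iff_unique.mpr ⟨‹_›, ‹_›⟩
  · rw [if_neg hodd]
    have heven : sPar p x p % 2 = 0 := by rw [← hS]; omega
    have hinv : ∀ (n : ℕ) (v : Fin (2 * p)),
        ((f^[n] v).val % 2 + sPar p x ((f^[n] v).val / 2)) % 2
          = (v.val % 2 + sPar p x (v.val / 2)) % 2 := by
      intro n
      induction n with
      | zero => intro v; rfl
      | succ n ih =>
        intro v
        rw [Function.iterate_succ_apply', color_invariant p hp x f hf heven]
        exact ih v
    have hrel : ∀ v w : Fin (2 * p), (orbitSetoid f).r v w →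
        (v.val % 2 + sPar p x (v.val / 2)) % 2 = (w.val % 2 + sPar p x (w.val / 2)) % 2 := by
      rintro v w ⟨n, m, hnm⟩
      rw [← hinv n v, hnm, hinv m w]
    let F : Quotient (orbitSetoid f) → Fin 2 :=
      Quotient.lift (fun v : Fin (2 * p) => (⟨_, hc2 v⟩ : Fin 2))
        (fun a b hab => Fin.ext (hrel a b hab))
    have hbij : Function.Bijective F := by
      constructor
      · intro q1 q2 hq
        induction q1 using Quotient.ind
        induction q2 using Quotient.ind
        rename_i v w
        have hcv : (v.val % 2 + sPar p x (v.val / 2)) % 2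
            = (w.val % 2 + sPar p x (w.val / 2)) % 2 := congrArg Fin.val hq
        apply Quotient.sound
        refine (orbitSetoid f).iseqv.trans (hvc v)
          ((orbitSetoid f).iseqv.trans ?_ ((orbitSetoid f).iseqv.symm (hvc w)))
        have : (⟨(v.val % 2 + sPar p x (v.val / 2)) % 2, by have := hc2 v; omega⟩ : Fin (2*p))
            = ⟨(w.val % 2 + sPar p x (w.val / 2)) % 2, by have := hc2 w; omega⟩ :=
          Fin.ext hcv
        rw [this]
      · intro y
        refine ⟨Quotient.mk _ ⟨y.val, by omega⟩, ?_⟩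
        apply Fin.ext
        show ((y.val % 2 + sPar p x (y.val / 2)) % 2) = y.val
        have hy : y.val < 2 := y.isLt
        have : y.val / 2 = 0 := by omega
        rw [this, h00]
        omega
    rw [Nat.card_congr (Equiv.ofBijective F hbij)]
    simp
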